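/- The modified Bell model is non-contextual: there exists a probability distribution q on functions {a,b,c,d} → {0,1} whose pairwise marginals on the four cycle contexts are exactly q|_{ab} = (0, 1/2, 1/2, 0), q|_{bc} = (3/8, 1/8, 1/8, 3/8), q|_{cd} = (3/8, 1/8, 1/8, 3/8), q|_{da} = (1/8, 3/8, 3/8, 1/8), with entries listed in order (0,0),(0,1),(1,0),(1,1). -/

import Mathlib

open scoped Classical

/-- Modified Bell model table on the 4-cycle: edge `k` joins measurements `k` and `k+1`;
the context `ab` (edge 0) is perfectly anti-correlated. -/
noncomputable def modBellTable (k : Fin 4) (i j : Bool) : ℝ :=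
  if k = 0 then (if i ≠ j then 1/2 else 0)
  else if k = 3 then (if i = j then 1/8 else 3/8)
  else (if i = j then 3/8 else 1/8)

/-- Explicit weights for the global distribution. -/
noncomputable def modBellW : Bool → Bool → Bool → Bool → ℝ
  | false, true, false, false => 1/16
  | false, true, true, false => 1/16
  | false, true, true, true => 5/16
  | false, true, false, true => 1/16
  | true, false, true, true => 1/16
  | true, false, false, true => 1/16
  | true, false, false, false => 5/16
  | true, false, true, false => 1/16
  | _, _, _, _ => 0

theorem modBell_piSum (f : (Fin 4 → Bool) → ℝ) :
    ∑ g : Fin 4 → Bool, f g = ∑ a, ∑ b, ∑ c, ∑ d, f ![a,b,c,d] := by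
  rw [← (Fin.consEquiv (fun _ : Fin 4 => Bool)).sum_comp, Fintype.sum_prod_type]
  congr 1; ext a
  rw [← (Fin.consEquiv (fun _ : Fin 3 => Bool)).sum_comp, Fintype.sum_prod_type]
  congr 1; ext b
  rw [← (Fin.consEquiv (fun _ : Fin 2 => Bool)).sum_comp, Fintype.sum_prod_type]
  congr 1; ext c
  rw [← (Equiv.funUnique (Fin 1) Bool).symm.sum_comp]
  congr 1; ext d
  congr 1
  ext i
  fin_cases i <;> rfl

theorem stmt_17 :
    ∃ q : (Fin 4 → Bool) → ℝ,
      (∀ g, 0 ≤ q g) ∧ (∑ g : Fin 4 → Bool, q g = 1) ∧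
      ∀ k : Fin 4, ∀ i j : Bool,
        (∑ g : Fin 4 → Bool, if g k = i ∧ g (k + 1) = j then q g else 0) =
          modBellTable k i j := by
  refine ⟨fun g => modBellW (g 0) (g 1) (g 2) (g 3), ?_, ?_, ?_⟩
  · intro g
    rcases Bool.dichotomy (g 0) with h0 | h0 <;> rcases Bool.dichotomy (g 1) with h1 | h1 <;>
      rcases Bool.dichotomy (g 2) with h2 | h2 <;> rcases Bool.dichotomy (g 3) with h3 | h3 <;>
      simp [h0, h1, h2, h3, modBellW] <;> norm_num
  · rw [modBell_piSum]
    simp only [Fintype.sum_bool, Matrix.cons_val_zero, Matrix.cons_val_one, Matrix.cons_val_two, Matrix.cons_val_three, Matrix.head_cons, Matrix.tail_cons]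
    norm_num [modBellW]
  · intro k i j
    rw [modBell_piSum]
    fin_cases k <;> rcases i with _ | _ <;> rcases j with _ | _ <;>
      simp only [Fintype.sum_bool, Matrix.cons_val_zero, Matrix.cons_val_one, Matrix.cons_val_two, Matrix.cons_val_three, Matrix.head_cons, Matrix.tail_cons] <;>
      norm_num [Fintype.sum_bool, modBellW, modBellTable, Fin.ext_iff, Fin.add_def, show ((3:Fin 4):ℕ) = 3 from rfl]
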